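/- Let N ≥ 1 and consider an N-player aggregative game with pseudogradient G_i(x) := c_i'(x_i) + Σ_{k≠i} α_{i,k} x_k, where each c_i : ℝ → ℝ is twice continuously differentiable with c_i''(x) ≥ κ_i > 0 for all x. Let d ∈ {1,…,N} be the deceptive player and 𝒟 ⊆ {1,…,N} \ {d} the set of oblivious players; let Λ ∈ ℝ^(N×N) be diagonal with Λ_{ii} = α_{i,d} for i ∈ 𝒟 and 0 otherwise, and γ(x, δ) := G(x) + δΛx. Let x* ∈ ℝ^N satisfy G(x*) = 0, assume the Jacobian Ξ* := DG(x*) is invertible, and suppose ((Ξ*)^{-1} Λ x*)_d · x_d* ≠ 0. Let U ⊆ ℝ be an open interval containing 0 and g : U → ℝ^N be continuously differentiable with g(0) = x* and γ(g(δ), δ) = 0 for all δ ∈ U, so that g'(0) = −(Ξ*)^{-1} Λ x*. Then there exists a nonempty open interval E ⊆ U \ {0} having 0 as an endpoint such that J_d(g(δ)) < J_d(x*) for every δ ∈ E, where J_d(x) := c_d(x_d) + (Σ_{k≠d} α_{d,k} x_k)·x_d. -/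

import Mathlib

open Filter Topology

lemma aux_side (h : ℝ → ℝ) (L : ℝ) (hL : L ≠ 0) (hd : HasDerivAt h L 0)
    (U : Set ℝ) (hUo : IsOpen U) (h0 : (0:ℝ) ∈ U) :
    ∃ E : Set ℝ,
      (∃ R > 0, E = Set.Ioo (-R) 0 ∨ E = Set.Ioo 0 R) ∧
      E ⊆ U \ {0} ∧ ∀ δ ∈ E, h δ < h 0 := by
  have hslope := hasDerivAt_iff_tendsto_slope.mp hd
  have hUnhds : U ∈ 𝓝 (0:ℝ) := hUo.mem_nhds h0
  rcases lt_or_gt_of_ne hL with hneg | hpos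
  · have h1 : ∀ᶠ δ in 𝓝[≠] (0:ℝ), slope h 0 δ < 0 :=
      hslope.eventually (eventually_lt_nhds hneg)
    have h2 : ∀ᶠ δ in 𝓝[>] (0:ℝ), slope h 0 δ < 0 :=
      h1.filter_mono (nhdsWithin_mono _ (fun x hx => ne_of_gt hx))
    have h3 : ∀ᶠ δ in 𝓝[>] (0:ℝ), δ ∈ U := nhdsWithin_le_nhds hUnhds
    obtain ⟨R, hR, hsub⟩ := mem_nhdsGT_iff_exists_Ioo_subset.mp (h2.and h3)
    refine ⟨Set.Ioo 0 R, ⟨R, hR, Or.inr rfl⟩, ?_, ?_⟩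
    · intro δ hδ
      exact ⟨(hsub hδ).2, ne_of_gt hδ.1⟩
    · intro δ hδ
      have hs := (hsub hδ).1
      have : (h δ - h 0) / δ < 0 := by
        simpa [slope_def_field] using hs
      rcases div_neg_iff.mp this with ⟨_, h'⟩ | ⟨h', _⟩
      · linarith [hδ.1]
      · linarith
  · have h1 : ∀ᶠ δ in 𝓝[≠] (0:ℝ), 0 < slope h 0 δ :=
      hslope.eventually (eventually_gt_nhds hpos)
    have h2 : ∀ᶠ δ in 𝓝[<] (0:ℝ), 0 < slope h 0 δ :=
      h1.filter_mono (nhdsWithin_mono _ (fun x hx => ne_of_lt hx))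
    have h3 : ∀ᶠ δ in 𝓝[<] (0:ℝ), δ ∈ U := nhdsWithin_le_nhds hUnhds
    obtain ⟨l, hl, hsub⟩ := mem_nhdsLT_iff_exists_Ioo_subset.mp (h2.and h3)
    refine ⟨Set.Ioo (-(-l)) 0, ⟨-l, neg_pos.mpr hl, Or.inl rfl⟩, ?_, ?_⟩
    · intro δ hδ
      have : δ ∈ Set.Ioo l 0 := by simpa using hδ
      exact ⟨(hsub this).2, ne_of_lt this.2⟩
    · intro δ hδ
      have hδ' : δ ∈ Set.Ioo l 0 := by simpa using hδ
      have hs := (hsub hδ').1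
      have : 0 < (h δ - h 0) / δ := by
        simpa [slope_def_field] using hs
      rcases div_pos_iff.mp this with ⟨h', _⟩ | ⟨h', _⟩
      · linarith [hδ'.2]
      · linarith

theorem stmt11 (N : ℕ) (hN : 1 ≤ N)
    (c : Fin N → ℝ → ℝ) (κv : Fin N → ℝ)
    (hc : ∀ i, ContDiff ℝ 2 (c i))
    (hκ : ∀ i, 0 < κv i)
    (hconv : ∀ i x, κv i ≤ deriv (deriv (c i)) x)
    (α : Fin N → Fin N → ℝ) (hα0 : ∀ k, α k k = 0)
    (G : (Fin N → ℝ) → Fin N → ℝ)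
    (hG : G = fun x i => deriv (c i) (x i) + ∑ k ∈ Finset.univ.erase i, α i k * x k)
    (d : Fin N) (𝒟 : Finset (Fin N)) (hd𝒟 : d ∉ 𝒟)
    (Λ : Matrix (Fin N) (Fin N) ℝ)
    (hΛ : Λ = Matrix.diagonal (fun i => if i ∈ 𝒟 then α i d else 0))
    (γ : (Fin N → ℝ) → ℝ → Fin N → ℝ)
    (hγ : γ = fun x δ => G x + δ • Λ.mulVec x)
    (xstar : Fin N → ℝ) (hxstar : G xstar = 0)
    (Ξ : Matrix (Fin N) (Fin N) ℝ)
    (hΞ : Ξ = Matrix.of fun i j =>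
        if i = j then deriv (deriv (c i)) (xstar i) else α i j)
    (hΞinv : IsUnit Ξ.det)
    (hgood : (Ξ⁻¹.mulVec (Λ.mulVec xstar)) d * xstar d ≠ 0)
    (a b : ℝ) (U : Set ℝ) (hU : U = Set.Ioo a b) (h0U : (0:ℝ) ∈ U)
    (g : ℝ → Fin N → ℝ) (hgC1 : ContDiffOn ℝ 1 g U)
    (hg0 : g 0 = xstar) (hgzero : ∀ δ ∈ U, γ (g δ) δ = 0)
    (hg' : ∀ i, HasDerivAt (fun δ => g δ i) (-(Ξ⁻¹.mulVec (Λ.mulVec xstar)) i) 0)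
    (Jd : (Fin N → ℝ) → ℝ)
    (hJd : Jd = fun x => c d (x d) + (∑ k ∈ Finset.univ.erase d, α d k * x k) * x d) :
    ∃ E : Set ℝ,
      (∃ R > 0, E = Set.Ioo (-R) 0 ∨ E = Set.Ioo 0 R) ∧
      E ⊆ U \ {0} ∧
      ∀ δ ∈ E, Jd (g δ) < Jd xstar := by
  set p : ℝ := xstar d with hp
  set v : ℝ := (Ξ⁻¹.mulVec (Λ.mulVec xstar)) d with hv
  -- regularity of c d
  have hcd : ContDiff ℝ 2 (c d) := hc d
  have hder1 : Differentiable ℝ (c d) := hcd.differentiable (by norm_num)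
  have hder2 : Differentiable ℝ (deriv (c d)) := by
    have h21 : ContDiff ℝ 1 (deriv (c d)) := by
      have := (contDiff_succ_iff_deriv (n := 1)).mp (by exact_mod_cast hcd)
      exact this.2.2
    exact h21.differentiable one_ne_zero
  -- φ
  set φ : ℝ → ℝ := fun y => c d y - deriv (c d) y * y with hφ
  have hφ' : HasDerivAt φ (-(deriv (deriv (c d)) p * p)) p := by
    have h1 : HasDerivAt (c d) (deriv (c d) p) p := (hder1 p).hasDerivAt
    have h2 : HasDerivAt (fun y => deriv (c d) y * y)
        (deriv (deriv (c d)) p * p + deriv (c d) p * 1) p :=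
      ((hder2 p).hasDerivAt).mul (hasDerivAt_id p)
    have := h1.sub h2
    exact this.congr_deriv (by ring)
  -- chain rule
  have hgd : HasDerivAt (fun δ => g δ d) (-v) 0 := hg' d
  have hgd0 : g 0 d = p := by rw [hg0]
  have hcomp : HasDerivAt (fun δ => φ (g δ d))
      (deriv (deriv (c d)) p * p * v) 0 := by
    have := HasDerivAt.comp (0:ℝ) (hgd0 ▸ hφ') hgd
    exact this.congr_deriv (by rw [hgd0]; ring)
  -- the derivative is nonzero
  have hcpos : 0 < deriv (deriv (c d)) p := lt_of_lt_of_le (hκ d) (hconv d p)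
  have hL : deriv (deriv (c d)) p * p * v ≠ 0 := by
    have hpv : p * v ≠ 0 := by
      rw [mul_comm]; exact hgood
    rw [mul_assoc]
    exact mul_ne_zero (ne_of_gt hcpos) hpv
  -- the d-th component of G vanishes along g on U
  have hGd : ∀ δ ∈ U, G (g δ) d = 0 := by
    intro δ hδ
    have h := congrFun (hgzero δ hδ) d
    have hΛd : Λ.mulVec (g δ) d = 0 := by
      rw [hΛ, Matrix.mulVec_diagonal]
      simp [hd𝒟]
    rw [hγ] at h
    simpa [hΛd] using h
  -- Jd (g δ) = φ (g δ d) on U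
  have hJeq : ∀ δ ∈ U, Jd (g δ) = φ (g δ d) := by
    intro δ hδ
    have h := hGd δ hδ
    rw [hG] at h
    simp only at h
    have hsum : (∑ k ∈ Finset.univ.erase d, α d k * g δ k) = - deriv (c d) (g δ d) := by
      linarith
    rw [hJd, hφ]
    simp only
    rw [hsum]
    ring
  -- Jd xstar = φ p
  have hJstar : Jd xstar = φ p := by
    have h := congrFun hxstar d
    rw [hG] at h
    simp only at h
    have hsum : (∑ k ∈ Finset.univ.erase d, α d k * xstar k) = - deriv (c d) p := by
      simp only [Pi.zero_apply] at h
      linarith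
    rw [hJd, hφ]
    simp only
    rw [hsum]
    ring
  -- apply the aux lemma
  obtain ⟨E, hE1, hE2, hE3⟩ := aux_side (fun δ => φ (g δ d)) _ hL hcomp U
    (hU ▸ isOpen_Ioo) h0U
  refine ⟨E, hE1, hE2, ?_⟩
  intro δ hδ
  have hδU : δ ∈ U := (hE2 hδ).1
  rw [hJeq δ hδU, hJstar]
  have := hE3 δ hδ
  simpa [hgd0] using this
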